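/- arXiv:2109.06561 — 3 statements merged into one kernel-verified Lean document; each statement's English description precedes it below -/
import Mathlib

section
/- Let H be a graph with vertex set V_H containing an s-clique, let C_1 be a subset of V_H such that H[C_1] is s-colorable, and let G be any graph. Define G* with vertex set (∪_{i∈C_1} V_G × {i}) ∪ (V_H \ C_1), where each V_G × {i} is an independent set, (v,i) is adjacent to (u,j) for i,j ∈ C_1 iff {i,j} ∈ E_H and {v,u} ∈ E_G, each j ∈ V_H \ C_1 is adjacent to all of V_G × {i} whenever {i,j} ∈ E_H, and i,j ∈ V_H \ C_1 are adjacent iff {i,j} ∈ E_H. Then: if G contains an s-clique, G* contains H as an induced subgraph. -/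
/-- The graph `G*` of the Dalirrooyfard et al. reduction, built from an input graph `G`,
a pattern graph `H` and a set `C₁` of pattern vertices: it has a copy `V_G × {i}` of the
vertices of `G` for each `i ∈ C₁` (each such copy being an independent set, with
`(v,i)` adjacent to `(u,j)` iff `{i,j} ∈ E_H` and `{v,u} ∈ E_G`), together with one copy
of each `j ∈ V_H \ C₁` (adjacent to all of `V_G × {i}` iff `{i,j} ∈ E_H`, and adjacent
to each other according to `E_H`). -/
def GstarGraph {VG VH : Type*} (G : SimpleGraph VG) (H : SimpleGraph VH) (C1 : Set VH) :
    SimpleGraph ((VG × C1) ⊕ {j : VH // j ∉ C1}) where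
  Adj x y :=
    match x, y with
    | .inl (v, i), .inl (u, j) => H.Adj i j ∧ G.Adj v u
    | .inl (_, i), .inr j => H.Adj i j
    | .inr i, .inl (_, j) => H.Adj i j
    | .inr i, .inr j => H.Adj i j
  symm := by
    refine ⟨?_⟩
    rintro (⟨v, i⟩ | i) (⟨u, j⟩ | j) h
    · exact ⟨h.1.symm, h.2.symm⟩
    · exact h.symm
    · exact h.symm
    · exact h.symm
  loopless := by
    refine ⟨?_⟩
    rintro (⟨v, i⟩ | i) h
    · exact H.loopless.irrefl _ h.1
    · exact H.loopless.irrefl _ h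

/-- If `H` contains an `s`-clique, `H[C₁]` is `s`-colorable, and `G` contains an
`s`-clique, then `G*` contains `H` as an induced subgraph. -/
theorem Gstar_induced_of_clique {VG VH : Type*} [DecidableEq VG] [DecidableEq VH]
    (G : SimpleGraph VG) (H : SimpleGraph VH) (C1 : Set VH) (s : ℕ)
    (hHclique : ∃ K : Finset VH, H.IsNClique s K)
    (hcol : (H.induce C1).Colorable s)
    (hGclique : ∃ K : Finset VG, G.IsNClique s K) :
    Nonempty (H ↪g GstarGraph G H C1) := by
  classical
  obtain ⟨C⟩ := hcol
  obtain ⟨K, hK⟩ := hGclique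
  have e : K ≃ Fin s := K.equivFinOfCardEq hK.2
  set g : Fin s → VG := fun c => (e.symm c : VG) with hg
  have hgmem : ∀ c, g c ∈ K := fun c => (e.symm c).2
  have hginj : Function.Injective g := by
    intro a b h
    exact e.symm.injective (Subtype.ext h)
  have hgadj : ∀ a b : Fin s, a ≠ b → G.Adj (g a) (g b) := by
    intro a b hab
    exact hK.1 (hgmem a) (hgmem b) (fun h => hab (hginj h))
  set φ : VH → (VG × C1) ⊕ {j : VH // j ∉ C1} := fun i =>
    if h : i ∈ C1 then .inl (g (C ⟨i, h⟩), ⟨i, h⟩) else .inr ⟨i, h⟩ with hφ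
  refine ⟨⟨⟨φ, ?_⟩, ?_⟩⟩
  · intro i j hij
    by_cases hi : i ∈ C1 <;> by_cases hj : j ∈ C1 <;>
      simp only [hφ, hi, hj, dif_pos, dif_neg, not_false_iff] at hij
    · exact congrArg Subtype.val (Prod.ext_iff.mp (Sum.inl.inj hij)).2
    · exact absurd hij (by simp)
    · exact absurd hij (by simp)
    · exact congrArg Subtype.val (Sum.inr.inj hij)
  · intro i j
    by_cases hi : i ∈ C1 <;> by_cases hj : j ∈ C1 <;>
      simp only [hφ, hi, hj, dif_pos, dif_neg, not_false_iff, GstarGraph, Function.Embedding.coeFn_mk]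
    · constructor
      · rintro ⟨hH, _⟩; exact hH
      · intro hH
        refine ⟨hH, hgadj _ _ ?_⟩
        exact C.valid (show (H.induce C1).Adj ⟨i, hi⟩ ⟨j, hj⟩ from hH)
end

section
/- Fix k ≥ 3 and N ≥ 1, and binary strings x_0, x_1 ∈ {0,1}^{N×N}. Construct the graph G(x_0,x_1) with vertex sets A_1, A_2, B_1, B_2 each of size N, where each of these four sets induces a clique, there is a path of length 3 (with two internal fresh vertices) joining a_{1,i} to b_{1,i} for each i ∈ [N], an edge between a_{2,i} and b_{2,i} for each i ∈ [N], an edge {a_{1,j}, a_{2,k}} whenever x_0(j,k) = 1, and an edge {b_{1,j}, b_{2,k}} whenever x_1(j,k) = 1. Then G(x_0,x_1) contains an induced cycle of length 6 if and only if there exist (j,k) with x_0(j,k) = x_1(j,k) = 1. -/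
/-- Vertices of the induced even cycle lower bound graph: `inl (s, i)` is the `i`-th
vertex of the set `A₁, A₂, B₁, B₂` (for `s = 0, 1, 2, 3` respectively), and
`inr (i, t)` for `t = 0, 1` are the two internal vertices of the length-3 path
joining `a_{1,i}` to `b_{1,i}`. -/
abbrev EvenCycleVertex (N : ℕ) := (Fin 4 × Fin N) ⊕ (Fin N × Fin 2)

/-- Base relation for the induced even cycle lower bound graph `G(x₀, x₁)`:
each of `A₁, A₂, B₁, B₂` is a clique; for each `i` there is a path of length 3
`a_{1,i} - p_{i,0} - p_{i,1} - b_{1,i}` and an edge `{a_{2,i}, b_{2,i}}`; and there is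
an edge `{a_{1,j}, a_{2,k}}` iff `x₀ j k` and an edge `{b_{1,j}, b_{2,k}}` iff `x₁ j k`.
The graph is `SimpleGraph.fromRel` of this relation. -/
def evenCycleRel {N : ℕ} (x0 x1 : Fin N → Fin N → Prop) :
    EvenCycleVertex N → EvenCycleVertex N → Prop := fun a b =>
  match a, b with
  | .inl (s, i), .inl (t, j) =>
      (s = t) ∨ (s = 1 ∧ t = 3 ∧ i = j) ∨ (s = 0 ∧ t = 1 ∧ x0 i j) ∨
        (s = 2 ∧ t = 3 ∧ x1 i j)
  | .inl (s, i), .inr (j, t) => i = j ∧ ((s = 0 ∧ t = 0) ∨ (s = 2 ∧ t = 1))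
  | .inr (i, t), .inr (j, u) => i = j ∧ t = 0 ∧ u = 1
  | .inr _, .inl _ => False


private def ok4 (s t : Fin 4) : Bool :=
  s = t || (s = 1 && t = 3) || (s = 3 && t = 1) || (s = 0 && t = 1) || (s = 1 && t = 0)
    || (s = 2 && t = 3) || (s = 3 && t = 2)

private lemma no6' : ∀ a b c d e f : Fin 4, ¬(ok4 a b ∧ ok4 b c ∧ ok4 c d ∧ ok4 d e ∧ ok4 e f ∧
    ok4 f a ∧ a ≠ c ∧ b ≠ d ∧ c ≠ e ∧ d ≠ f ∧ e ≠ a ∧ f ≠ b ∧ a ≠ d ∧ b ≠ e ∧ c ≠ f) := by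
  decide

private lemma cons_val_five {α : Type*} (a b c d e f : α) :
    ![a, b, c, d, e, f] (5 : Fin 6) = f := rfl

private lemma cyc1 : ∀ i : Fin 6, (SimpleGraph.cycleGraph 6).Adj i (i + 1) := by decide
private lemma cyc5 : ∀ i : Fin 6, (SimpleGraph.cycleGraph 6).Adj i (i + 5) := by decide
private lemma ncyc2 : ∀ i : Fin 6, ¬ (SimpleGraph.cycleGraph 6).Adj i (i + 2) := by decide
private lemma ncyc3 : ∀ i : Fin 6, ¬ (SimpleGraph.cycleGraph 6).Adj i (i + 3) := by decide
private lemma fne : ∀ i : Fin 6, i + 1 ≠ i + 5 ∧ i + 2 ≠ i ∧ i + 4 ≠ i ∧ i + 3 ≠ i + 1 ∧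
    i + 3 ≠ i + 5 ∧ i ≠ i + 2 ∧ i ≠ i + 3 := by decide
private lemma fadd : ∀ i : Fin 6, i + 1 + 1 = i + 2 ∧ i + 4 + 1 = i + 5 ∧ i + 4 + 5 = i + 3 ∧
    i + 2 + 1 = i + 3 ∧ i + 5 + 5 = i + 4 := by decide

section Helpers
variable {N : ℕ} {x0 x1 : Fin N → Fin N → Prop}

local notation "G" => SimpleGraph.fromRel (evenCycleRel x0 x1)

private lemma nbr_p0 {m : Fin N} {w} (h : (G).Adj (.inr (m, 0)) w) :
    w = .inl (0, m) ∨ w = .inr (m, 1) := by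
  rw [SimpleGraph.fromRel_adj] at h
  obtain ⟨hne, h | h⟩ := h <;> rcases w with ⟨s, i⟩ | ⟨i, t⟩ <;> simp_all [evenCycleRel]

private lemma nbr_p1 {m : Fin N} {w} (h : (G).Adj (.inr (m, 1)) w) :
    w = .inl (2, m) ∨ w = .inr (m, 0) := by
  rw [SimpleGraph.fromRel_adj] at h
  obtain ⟨hne, h | h⟩ := h <;> rcases w with ⟨s, i⟩ | ⟨i, t⟩ <;> simp_all [evenCycleRel]

private lemma nbr_a1 {m : Fin N} {w} (h : (G).Adj (.inl (0, m)) w) :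
    (∃ j, w = .inl (0, j)) ∨ (∃ k, w = .inl (1, k) ∧ x0 m k) ∨ w = .inr (m, 0) := by
  rw [SimpleGraph.fromRel_adj] at h
  obtain ⟨hne, h | h⟩ := h <;> rcases w with ⟨s, i⟩ | ⟨i, t⟩ <;> simp_all [evenCycleRel] <;>
    aesop

private lemma nbr_b1 {m : Fin N} {w} (h : (G).Adj (.inl (2, m)) w) :
    (∃ j, w = .inl (2, j)) ∨ (∃ k, w = .inl (3, k) ∧ x1 m k) ∨ w = .inr (m, 1) := by
  rw [SimpleGraph.fromRel_adj] at h
  obtain ⟨hne, h | h⟩ := h <;> rcases w with ⟨s, i⟩ | ⟨i, t⟩ <;> simp_all [evenCycleRel] <;>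
    aesop

/-- a cross edge between the A side and the B side must be a matching edge `a2k - b2k`. -/
private lemma cross_edge {m : Fin N} {z y : EvenCycleVertex N}
    (hz : (∃ j, z = .inl (0, j)) ∨ (∃ k, z = .inl (1, k) ∧ x0 m k))
    (hy : (∃ j, y = .inl (2, j)) ∨ (∃ k, y = .inl (3, k) ∧ x1 m k))
    (h : (G).Adj z y) : ∃ k, x0 m k ∧ x1 m k := by
  rw [SimpleGraph.fromRel_adj] at h
  obtain ⟨hne, h | h⟩ := h <;>
    rcases hz with ⟨j, rfl⟩ | ⟨k, rfl, hk⟩ <;> rcases hy with ⟨j', rfl⟩ | ⟨k', rfl, hk'⟩ <;>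
    simp_all [evenCycleRel] <;> aesop

/-- edges within the `inl` part respect the class adjacency structure -/
private lemma class_edge {s t : Fin 4} {i j : Fin N}
    (h : (G).Adj (.inl (s, i)) (.inl (t, j))) : ok4 s t := by
  rw [SimpleGraph.fromRel_adj] at h
  obtain ⟨hne, h | h⟩ := h <;>
    rcases h with rfl | ⟨rfl, rfl, _⟩ | ⟨rfl, rfl, _⟩ | ⟨rfl, rfl, _⟩ <;> simp [ok4]

private lemma class_adj {a b : Fin 4 × Fin N} (h1 : a.1 = b.1)
    (h2 : (Sum.inl a : EvenCycleVertex N) ≠ .inl b) : (G).Adj (.inl a) (.inl b) := by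
  obtain ⟨s, i⟩ := a
  obtain ⟨t, j⟩ := b
  cases h1
  exact SimpleGraph.fromRel_adj .. |>.2 ⟨h2, Or.inl (Or.inl rfl)⟩

end Helpers


set_option maxHeartbeats 1000000 in
/-- The lower bound graph `G(x₀, x₁)` contains an induced cycle of length 6 if and
only if there is a pair `(j, k)` with `x₀ j k = x₁ j k = 1`. -/
theorem evenCycle_lowerBoundGraph_induced_sixCycle_iff (N : ℕ) (hN : 1 ≤ N)
    (x0 x1 : Fin N → Fin N → Prop) :
    Nonempty (SimpleGraph.cycleGraph 6 ↪g SimpleGraph.fromRel (evenCycleRel x0 x1)) ↔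
      ∃ j k : Fin N, x0 j k ∧ x1 j k := by
  constructor
  · rintro ⟨f⟩
    set G := SimpleGraph.fromRel (evenCycleRel x0 x1) with hG
    set v : Fin 6 → EvenCycleVertex N := fun i => f i with hv
    have hinj : Function.Injective v := f.injective
    have hA1 : ∀ i : Fin 6, G.Adj (v i) (v (i + 1)) := fun i => f.map_rel_iff.2 (cyc1 i)
    have hA5 : ∀ i : Fin 6, G.Adj (v i) (v (i + 5)) := fun i => f.map_rel_iff.2 (cyc5 i)
    have hN2 : ∀ i : Fin 6, ¬ G.Adj (v i) (v (i + 2)) :=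
      fun i hc => ncyc2 i (f.map_rel_iff.1 hc)
    have hN3 : ∀ i : Fin 6, ¬ G.Adj (v i) (v (i + 3)) :=
      fun i hc => ncyc3 i (f.map_rel_iff.1 hc)
    have hne : ∀ i j : Fin 6, i ≠ j → v i ≠ v j := fun i j h hc => h (hinj hc)
    -- main extraction when some inr (m, 0) is in the cycle
    have key : ∀ i : Fin 6, ∀ m : Fin N, v i = .inr (m, 0) → ∃ j k, x0 j k ∧ x1 j k := by
      intro i m him
      have h1 : v (i + 1) = .inl (0, m) ∨ v (i + 1) = .inr (m, 1) := nbr_p0 (him ▸ hA1 i)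
      have h5 : v (i + 5) = .inl (0, m) ∨ v (i + 5) = .inr (m, 1) := nbr_p0 (him ▸ hA5 i)
      have h15 : v (i + 1) ≠ v (i + 5) := hne _ _ (fne i).1
      rcases h1 with h1 | h1
      · -- v (i+1) = a1 m, so v (i+5) = p m 1, v (i+4) = b1 m
        have h5' : v (i + 5) = .inr (m, 1) := by
          rcases h5 with h5 | h5
          · exact absurd (h1.trans h5.symm) h15
          · exact h5
        have h4 : v (i + 4) = .inl (2, m) ∨ v (i + 4) = .inr (m, 0) := by
          have h := hA1 (i + 4)
          rw [(fadd i).2.1] at h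
          exact nbr_p1 (h5' ▸ h.symm)
        have h4' : v (i + 4) = .inl (2, m) := by
          rcases h4 with h4 | h4
          · exact h4
          · exact absurd (h4.trans him.symm) (hne _ _ (fne i).2.2.1)
        have hz := nbr_a1 (h1 ▸ hA1 (i + 1) : G.Adj (.inl (0, m)) (v (i + 1 + 1)))
        rw [(fadd i).1] at hz
        have hz' : (∃ j, v (i + 2) = .inl (0, j)) ∨ ∃ k, v (i + 2) = .inl (1, k) ∧ x0 m k := by
          rcases hz with h | h | h
          · exact Or.inl h
          · exact Or.inr h
          · exact absurd (h.trans him.symm) (hne _ _ (fne i).2.1)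
        have hy := nbr_b1 (h4' ▸ hA5 (i + 4) : G.Adj (.inl (2, m)) (v (i + 4 + 5)))
        rw [(fadd i).2.2.1] at hy
        have hy' : (∃ j, v (i + 3) = .inl (2, j)) ∨ ∃ k, v (i + 3) = .inl (3, k) ∧ x1 m k := by
          rcases hy with h | h | h
          · exact Or.inl h
          · exact Or.inr h
          · exact absurd (h.trans h5'.symm) (hne _ _ (fne i).2.2.2.2.1)
        have hzy : G.Adj (v (i + 2)) (v (i + 3)) := by
          have h := hA1 (i + 2); rwa [(fadd i).2.2.2.1] at h
        exact ⟨m, cross_edge hz' hy' hzy⟩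
      · -- v (i+1) = p m 1, symmetric
        have h5' : v (i + 5) = .inl (0, m) := by
          rcases h5 with h5 | h5
          · exact h5
          · exact absurd (h1.trans h5.symm) h15
        have h2 : v (i + 2) = .inl (2, m) ∨ v (i + 2) = .inr (m, 0) := by
          have h := hA1 (i + 1)
          rw [(fadd i).1] at h
          exact nbr_p1 (h1 ▸ h)
        have h2' : v (i + 2) = .inl (2, m) := by
          rcases h2 with h2 | h2
          · exact h2
          · exact absurd (h2.trans him.symm) (hne _ _ (fne i).2.1)
        have hz := nbr_a1 (h5' ▸ hA5 (i + 5) : G.Adj (.inl (0, m)) (v (i + 5 + 5)))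
        rw [(fadd i).2.2.2.2] at hz
        have hz' : (∃ j, v (i + 4) = .inl (0, j)) ∨ ∃ k, v (i + 4) = .inl (1, k) ∧ x0 m k := by
          rcases hz with h | h | h
          · exact Or.inl h
          · exact Or.inr h
          · exact absurd (h.trans him.symm) (hne _ _ (fne i).2.2.1)
        have hy := nbr_b1 (h2' ▸ hA1 (i + 2) : G.Adj (.inl (2, m)) (v (i + 2 + 1)))
        rw [(fadd i).2.2.2.1] at hy
        have hy' : (∃ j, v (i + 3) = .inl (2, j)) ∨ ∃ k, v (i + 3) = .inl (3, k) ∧ x1 m k := by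
          rcases hy with h | h | h
          · exact Or.inl h
          · exact Or.inr h
          · exact absurd (h.trans h1.symm) (hne _ _ (fne i).2.2.2.1)
        have hzy : G.Adj (v (i + 4)) (v (i + 3)) := by
          have h := hA5 (i + 4); rwa [(fadd i).2.2.1] at h
        exact ⟨m, cross_edge hz' hy' hzy⟩
    by_cases hall : ∀ i : Fin 6, ∃ p : Fin 4 × Fin N, v i = .inl p
    · -- all cycle vertices in the clique part: contradiction via no6'
      exfalso
      choose p hp using hall
      have hok : ∀ i : Fin 6, ok4 (p i).1 (p (i + 1)).1 := by
        intro i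
        have h := hA1 i
        rw [hp i, hp (i + 1)] at h
        exact class_edge h
      have hned : ∀ i j : Fin 6, ¬ G.Adj (v i) (v j) → i ≠ j → (p i).1 ≠ (p j).1 := by
        intro i j hna hij hc
        have hvij : v i ≠ v j := hne _ _ hij
        rw [hp i, hp j] at hvij hna
        exact hna (class_adj hc hvij)
      have hn2 : ∀ i : Fin 6, (p i).1 ≠ (p (i + 2)).1 :=
        fun i => hned _ _ (hN2 i) (fne i).2.2.2.2.2.1
      have hn3 : ∀ i : Fin 6, (p i).1 ≠ (p (i + 3)).1 :=
        fun i => hned _ _ (hN3 i) (fne i).2.2.2.2.2.2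
      exact no6' (p 0).1 (p 1).1 (p 2).1 (p 3).1 (p 4).1 (p 5).1
        ⟨hok 0, hok 1, hok 2, hok 3, hok 4, hok 5,
          hn2 0, hn2 1, hn2 2, hn2 3, hn2 4, hn2 5, hn3 0, hn3 1, hn3 2⟩
    · push_neg at hall
      obtain ⟨i, hi⟩ := hall
      have hex : ∃ m : Fin N, ∃ t : Fin 2, v i = .inr (m, t) := by
        rcases h : v i with p | ⟨m, t⟩
        · exact absurd h (hi p)
        · exact ⟨m, t, rfl⟩
      obtain ⟨m, t, him⟩ := hex
      fin_cases t
      · exact key i m him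
      · have h1 : v (i + 1) = .inl (2, m) ∨ v (i + 1) = .inr (m, 0) := nbr_p1 (him ▸ hA1 i)
        have h5 : v (i + 5) = .inl (2, m) ∨ v (i + 5) = .inr (m, 0) := nbr_p1 (him ▸ hA5 i)
        have h15 : v (i + 1) ≠ v (i + 5) := hne _ _ (fne i).1
        rcases h1 with h1 | h1
        · rcases h5 with h5 | h5
          · exact absurd (h1.trans h5.symm) h15
          · exact key (i + 5) m h5
        · exact key (i + 1) m h1
  · rintro ⟨j, k, hx0, hx1⟩
    refine ⟨⟨⟨![.inl (0, j), .inr (j, 0), .inr (j, 1), .inl (2, j), .inl (3, k), .inl (1, k)],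
      ?_⟩, ?_⟩⟩
    · intro a b hab
      fin_cases a <;> fin_cases b <;> simp_all [cons_val_five]
    · intro a b
      fin_cases a <;> fin_cases b <;>
        dsimp only [DFunLike.coe] <;>
        simp [SimpleGraph.fromRel_adj, evenCycleRel, SimpleGraph.cycleGraph_adj, cons_val_five] <;>
        first
          | decide
          | tauto
end

section
/- Suppose there exists an (n, k+m)-family of perfect hash functions F' from [n] to [k+m]. Then there exists a family F of functions χ: [n] → {0,1,...,k} of size |F'| · binomial(k+m, k) · k! such that for any two disjoint sets S, T ⊆ [n] with |S| = k and |T| ≤ m, and any bijection b: S → {1,...,k}, there is χ ∈ F with χ agreeing with b on S and χ(t) = 0 for all t ∈ T. -/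
/-- Suppose `F'` is an `(n, k+m)`-family of perfect hash functions from `[n]` to
`[k+m]` (for every subset of size at most `k+m` some member is injective on it).
Then there is a family `F` of colorings `χ : [n] → {0, 1, …, k}` of size
`|F'| · binomial(k+m, k) · k!` such that for any disjoint `S, T ⊆ [n]` with `|S| = k`
and `|T| ≤ m`, and any bijection `b : S → {1, …, k}`, some `χ ∈ F` agrees with `b` on
`S` (via the identification of `{1, …, k}` with the nonzero colors) and assigns color
`0` to all of `T`. -/
theorem perfect_hash_to_separating_family (n k m : ℕ)
    (F' : Finset (Fin n → Fin (k + m)))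
    (hF' : ∀ A : Finset (Fin n), A.card ≤ k + m → ∃ f ∈ F', Set.InjOn f ↑A) :
    ∃ F : Fin (F'.card * Nat.choose (k + m) k * Nat.factorial k) →
        (Fin n → Fin (k + 1)),
      ∀ S T : Finset (Fin n), Disjoint S T → S.card = k → T.card ≤ m →
        ∀ b : Fin n → Fin k, Set.InjOn b ↑S →
          ∃ idx, (∀ x ∈ S, F idx x = (b x).succ) ∧ (∀ t ∈ T, F idx t = 0) := by
  classical
  set N := F'.card * Nat.choose (k + m) k * Nat.factorial k with hN
  -- patterns from embeddings
  let pat : (Fin k ↪ Fin (k + m)) → Fin (k + m) → Fin (k + 1) :=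
    fun e j => if h : ∃ a, e a = j then (h.choose).succ else 0
  have pat_eq : ∀ (e : Fin k ↪ Fin (k + m)) (a : Fin k), pat e (e a) = a.succ := by
    intro e a
    have h : ∃ a', e a' = e a := ⟨a, rfl⟩
    simp only [pat, dif_pos h]
    congr 1
    exact e.injective h.choose_spec
  have pat_zero : ∀ (e : Fin k ↪ Fin (k + m)) (j : Fin (k + m)),
      (¬ ∃ a, e a = j) → pat e j = 0 := by
    intro e j h
    simp only [pat, dif_neg h]
  let Q : Finset (Fin n → Fin (k + 1)) :=
    (F' ×ˢ (Finset.univ : Finset (Fin k ↪ Fin (k + m)))).image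
      (fun fe => pat fe.2 ∘ fe.1)
  have hQcard : Q.card ≤ N := by
    calc Q.card ≤ F'.card * Fintype.card (Fin k ↪ Fin (k + m)) := by
          refine Finset.card_image_le.trans ?_
          rw [Finset.card_product, Finset.card_univ]
      _ = N := by
          rw [Fintype.card_embedding_eq, Fintype.card_fin, Fintype.card_fin, hN,
            Nat.descFactorial_eq_factorial_mul_choose]
          ring
  refine ⟨fun idx => Q.toList.getD idx (fun _ => 0), ?_⟩
  intro S T hdisj hS hT b hb
  -- get a hash function injective on S ∪ T
  obtain ⟨f, hfF, hfinj⟩ := hF' (S ∪ T) (by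
    calc (S ∪ T).card ≤ S.card + T.card := Finset.card_union_le S T
      _ ≤ k + m := by omega)
  -- b maps S onto Fin k
  have himg : S.image b = Finset.univ := by
    apply Finset.eq_univ_of_card
    rw [Finset.card_image_of_injOn hb, hS, Fintype.card_fin]
  have hsur : ∀ a : Fin k, ∃ s, s ∈ S ∧ b s = a := by
    intro a
    have : a ∈ S.image b := himg ▸ Finset.mem_univ a
    simpa using Finset.mem_image.mp this
  let g : Fin k → Fin n := fun a => (hsur a).choose
  have hgS : ∀ a, g a ∈ S := fun a => (hsur a).choose_spec.1
  have hbg : ∀ a, b (g a) = a := fun a => (hsur a).choose_spec.2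
  have einj : Function.Injective (fun a => f (g a)) := by
    intro a a' h
    have hg : g a = g a' := hfinj (Finset.mem_coe.mpr (Finset.mem_union_left _ (hgS a)))
      (Finset.mem_coe.mpr (Finset.mem_union_left _ (hgS a'))) h
    rw [← hbg a, ← hbg a', hg]
  let e : Fin k ↪ Fin (k + m) := ⟨fun a => f (g a), einj⟩
  let χ : Fin n → Fin (k + 1) := pat e ∘ f
  have hχQ : χ ∈ Q := by
    refine Finset.mem_image.mpr ⟨(f, e), ?_, rfl⟩
    exact Finset.mem_product.mpr ⟨hfF, Finset.mem_univ _⟩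
  -- properties of χ
  have hχS : ∀ x ∈ S, χ x = (b x).succ := by
    intro x hx
    have hgx : g (b x) = x := hb (Finset.mem_coe.mpr (hgS (b x)))
      (Finset.mem_coe.mpr hx) (hbg (b x))
    have : e (b x) = f x := by simp only [e, Function.Embedding.coeFn_mk, hgx]
    calc χ x = pat e (e (b x)) := by rw [this]; rfl
      _ = (b x).succ := pat_eq e (b x)
  have hχT : ∀ t ∈ T, χ t = 0 := by
    intro t ht
    apply pat_zero
    rintro ⟨a, ha⟩
    have : g a = t := hfinj (Finset.mem_coe.mpr (Finset.mem_union_left _ (hgS a)))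
      (Finset.mem_coe.mpr (Finset.mem_union_right _ ht)) ha
    exact (Finset.disjoint_left.mp hdisj (this ▸ hgS a)) ht
  -- find index
  obtain ⟨i, hi⟩ := List.mem_iff_get.mp (Finset.mem_toList.mpr hχQ)
  have hlen : Q.toList.length = Q.card := Finset.length_toList Q
  have hiN : i.val < N := lt_of_lt_of_le (hlen ▸ i.isLt) hQcard
  have hF : Q.toList.getD i.val (fun _ => 0) = χ := by
    rw [List.getD_eq_getElem _ _ i.isLt, ← hi]
    simp [List.get_eq_getElem]
  refine ⟨⟨i.val, hiN⟩, fun x hx => ?_, fun t ht => ?_⟩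
  · show Q.toList.getD i.val (fun _ => 0) x = _
    rw [hF]; exact hχS x hx
  · show Q.toList.getD i.val (fun _ => 0) t = _
    rw [hF]; exact hχT t ht
end
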